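/- arXiv:2403.18571 — 2 statements merged into one kernel-verified Lean document; each statement's English description precedes it below -/
import Mathlib

section
/- Dissipation implies stability: if X ≻ 0 and for all ξ, w with w in the sector (i.e., -2wᵀw + 2γ²ξᵀξ ≥ 0) the strict decrease ξ₊ᵀ X ξ₊ - ξᵀ X ξ < 0 holds for ξ₊ = Aξ + B w whenever (ξ,w) ≠ 0, then the closed loop ξ(t+1) = A ξ(t) + B Δ_t(ξ(t)) with any functions Δ_t satisfying ‖Δ_t(ξ)‖ ≤ γ‖ξ‖ converges to zero (indeed V(ξ(t)) = ξ(t)ᵀXξ(t) is strictly decreasing along nonzero trajectories). -/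
open Matrix Filter

set_option maxHeartbeats 1000000 in
theorem stmt12 {n : ℕ} (A B : Matrix (Fin n) (Fin n) ℝ) (γ : ℝ) (hγ : 0 ≤ γ)
    (X : Matrix (Fin n) (Fin n) ℝ) (hX : X.PosDef)
    (hdiss : ∀ ξv wv : Fin n → ℝ, ¬ (ξv = 0 ∧ wv = 0) →
      -2 * (wv ⬝ᵥ wv) + 2 * γ ^ 2 * (ξv ⬝ᵥ ξv) ≥ 0 →
      (A.mulVec ξv + B.mulVec wv) ⬝ᵥ X.mulVec (A.mulVec ξv + B.mulVec wv)
        - ξv ⬝ᵥ X.mulVec ξv < 0)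
    (Δ : ℕ → (Fin n → ℝ) → (Fin n → ℝ))
    (hΔ : ∀ t ξv, (Δ t ξv) ⬝ᵥ (Δ t ξv) ≤ γ ^ 2 * (ξv ⬝ᵥ ξv))
    (ξ : ℕ → Fin n → ℝ)
    (hdyn : ∀ t, ξ (t + 1) = A.mulVec (ξ t) + B.mulVec (Δ t (ξ t))) :
    Tendsto ξ atTop (nhds 0) ∧
      ∀ t, ξ t ≠ 0 →
        (ξ (t + 1)) ⬝ᵥ X.mulVec (ξ (t + 1)) < (ξ t) ⬝ᵥ X.mulVec (ξ t) := by
  -- basic facts about the quadratic forms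
  have hVpos : ∀ x : Fin n → ℝ, x ≠ 0 → 0 < x ⬝ᵥ X.mulVec x := by
    intro x hx
    have := hX.dotProduct_mulVec_pos hx
    simpa using this
  have hVnonneg : ∀ x : Fin n → ℝ, 0 ≤ x ⬝ᵥ X.mulVec x := by
    intro x
    rcases eq_or_ne x 0 with rfl | hx
    · simp
    · exact (hVpos x hx).le
  have hdotnn : ∀ x : Fin n → ℝ, 0 ≤ x ⬝ᵥ x := by
    intro x
    simpa [dotProduct] using Finset.sum_nonneg
      (fun i (_ : i ∈ Finset.univ) => mul_self_nonneg (x i))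
  have hcoord : ∀ (x : Fin n → ℝ) i, x i ^ 2 ≤ x ⬝ᵥ x := by
    intro x i
    have := Finset.single_le_sum (f := fun j => x j * x j)
      (fun j _ => mul_self_nonneg (x j)) (Finset.mem_univ i)
    simpa [dotProduct, sq] using this
  have hscaleD : ∀ (c : ℝ) (x y : Fin n → ℝ),
      (c • x) ⬝ᵥ (c • y) = c * (c * (x ⬝ᵥ y)) := by
    intro c x y
    rw [smul_dotProduct, dotProduct_smul, smul_eq_mul, smul_eq_mul]
  have hscaleV : ∀ (c : ℝ) (x : Fin n → ℝ),
      (c • x) ⬝ᵥ X.mulVec (c • x) = c * (c * (x ⬝ᵥ X.mulVec x)) := by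
    intro c x
    rw [mulVec_smul, hscaleD]
  -- the strict decrease claim
  have hdec : ∀ t, ξ t ≠ 0 →
      (ξ (t + 1)) ⬝ᵥ X.mulVec (ξ (t + 1)) < (ξ t) ⬝ᵥ X.mulVec (ξ t) := by
    intro t ht
    have hsec : -2 * ((Δ t (ξ t)) ⬝ᵥ (Δ t (ξ t))) + 2 * γ ^ 2 * (ξ t ⬝ᵥ ξ t) ≥ 0 := by
      have := hΔ t (ξ t); linarith
    have := hdiss (ξ t) (Δ t (ξ t)) (fun h => ht h.1) hsec
    rw [hdyn t]; linarith
  refine ⟨?_, hdec⟩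
  -- trivial case n = 0
  rcases Nat.eq_zero_or_pos n with hn | hn
  · subst hn
    have hξ0 : ξ = fun _ => 0 := funext fun t => Subsingleton.elim _ _
    rw [hξ0]
    exact tendsto_const_nhds
  -- continuity facts
  have hcont : Continuous fun x : Fin n → ℝ => x ⬝ᵥ X.mulVec x :=
    continuous_id.dotProduct (continuous_const.matrix_mulVec continuous_id)
  have hcontd : Continuous fun x : Fin n → ℝ => x ⬝ᵥ x :=
    continuous_id.dotProduct continuous_id
  -- norm bound from dot product bound
  have habs : ∀ (x : Fin n → ℝ) (r : ℝ), 0 ≤ r → x ⬝ᵥ x ≤ r ^ 2 → ‖x‖ ≤ r := by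
    intro x r hr h
    rw [pi_norm_le_iff_of_nonneg hr]
    intro i
    have h1 : x i ^ 2 ≤ r ^ 2 := le_trans (hcoord x i) h
    calc ‖x i‖ = Real.sqrt (x i ^ 2) := (Real.sqrt_sq_eq_abs _).symm
      _ ≤ Real.sqrt (r ^ 2) := Real.sqrt_le_sqrt h1
      _ = r := Real.sqrt_sq hr
  -- minimum of V on the unit sphere
  set S : Set (Fin n → ℝ) := {x | x ⬝ᵥ x = 1} with hSdef
  have hSne : S.Nonempty := by
    refine ⟨Pi.single ⟨0, hn⟩ 1, ?_⟩
    simp [hSdef, dotProduct, Pi.single_apply]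
  have hSclosed : IsClosed S := isClosed_eq hcontd continuous_const
  have hScpt : IsCompact S := by
    refine (isCompact_closedBall (0 : Fin n → ℝ) 1).of_isClosed_subset hSclosed ?_
    intro x hx
    rw [Metric.mem_closedBall, dist_zero_right]
    exact habs x 1 zero_le_one (by rw [hx]; norm_num)
  obtain ⟨xm, hxmS, hxm⟩ := hScpt.exists_isMinOn hSne hcont.continuousOn
  set m : ℝ := xm ⬝ᵥ X.mulVec xm with hmdef
  have hxm0 : xm ≠ 0 := by
    intro h
    rw [hSdef] at hxmS
    simp only [Set.mem_setOf_eq, h] at hxmS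
    simp at hxmS
  have hm : 0 < m := hVpos xm hxm0
  -- V x ≥ m * (x ⬝ᵥ x)
  have hmle : ∀ x : Fin n → ℝ, m * (x ⬝ᵥ x) ≤ x ⬝ᵥ X.mulVec x := by
    intro x
    rcases eq_or_ne x 0 with rfl | hx
    · simp
    · have hxx : 0 < x ⬝ᵥ x :=
        lt_of_le_of_ne (hdotnn x) (fun h => hx (dotProduct_self_eq_zero.mp h.symm))
      set s := Real.sqrt (x ⬝ᵥ x) with hs
      have hs0 : 0 < s := Real.sqrt_pos.mpr hxx
      have hss : s * s = x ⬝ᵥ x := Real.mul_self_sqrt hxx.le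
      have hmem : (s⁻¹ • x) ∈ S := by
        show (s⁻¹ • x) ⬝ᵥ (s⁻¹ • x) = 1
        rw [hscaleD, ← hss]
        field_simp
      have hle : m ≤ (s⁻¹ • x) ⬝ᵥ X.mulVec (s⁻¹ • x) := hxm hmem
      rw [hscaleV] at hle
      have h2 := mul_le_mul_of_nonneg_left hle (mul_pos hs0 hs0).le
      have heq : s * s * (s⁻¹ * (s⁻¹ * (x ⬝ᵥ X.mulVec x))) = x ⬝ᵥ X.mulVec x := by
        field_simp
      rw [heq] at h2
      calc m * (x ⬝ᵥ x) = s * s * m := by rw [hss]; ring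
        _ ≤ x ⬝ᵥ X.mulVec x := h2
  -- maximum of V(Ax+Bw) on the compact set K
  set K : Set ((Fin n → ℝ) × (Fin n → ℝ)) :=
    {p | p.1 ⬝ᵥ X.mulVec p.1 = 1 ∧ p.2 ⬝ᵥ p.2 ≤ γ ^ 2 * (p.1 ⬝ᵥ p.1)} with hKdef
  have hKne : K.Nonempty := by
    refine ⟨((Real.sqrt m)⁻¹ • xm, 0), ?_, ?_⟩
    · show ((Real.sqrt m)⁻¹ • xm) ⬝ᵥ X.mulVec ((Real.sqrt m)⁻¹ • xm) = 1
      rw [hscaleV, ← hmdef]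
      have hss : Real.sqrt m * Real.sqrt m = m := Real.mul_self_sqrt hm.le
      rw [← hss]
      field_simp
      rw [Real.sqrt_sq (Real.sqrt_nonneg _)]
    · show (0 : Fin n → ℝ) ⬝ᵥ (0 : Fin n → ℝ) ≤ γ ^ 2 * (((Real.sqrt m)⁻¹ • xm) ⬝ᵥ ((Real.sqrt m)⁻¹ • xm))
      rw [zero_dotProduct]
      exact mul_nonneg (sq_nonneg γ) (hdotnn _)
  have hKclosed : IsClosed K := by
    refine IsClosed.inter (isClosed_eq (hcont.comp continuous_fst) continuous_const) ?_
    exact isClosed_le (hcontd.comp continuous_snd)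
      (continuous_const.mul (hcontd.comp continuous_fst))
  have hKcpt : IsCompact K := by
    have hc : IsCompact ((Metric.closedBall (0 : Fin n → ℝ) (Real.sqrt m⁻¹)) ×ˢ
        (Metric.closedBall (0 : Fin n → ℝ) (γ * Real.sqrt m⁻¹))) :=
      (isCompact_closedBall _ _).prod (isCompact_closedBall _ _)
    refine hc.of_isClosed_subset hKclosed ?_
    rintro ⟨x, w⟩ ⟨h1, h2⟩
    have hxx : x ⬝ᵥ x ≤ m⁻¹ := by
      have := hmle x
      rw [h1] at this
      rw [← mul_le_mul_iff_right₀ hm]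
      calc m * (x ⬝ᵥ x) ≤ 1 := this
        _ = m * m⁻¹ := by field_simp
    constructor
    · rw [Metric.mem_closedBall, dist_zero_right]
      refine habs x _ (Real.sqrt_nonneg _) ?_
      rwa [Real.sq_sqrt (by positivity : (0:ℝ) ≤ m⁻¹)]
    · rw [Metric.mem_closedBall, dist_zero_right]
      refine habs w _ (by positivity) ?_
      have : γ ^ 2 * (x ⬝ᵥ x) ≤ γ ^ 2 * m⁻¹ :=
        mul_le_mul_of_nonneg_left hxx (sq_nonneg γ)
      calc w ⬝ᵥ w ≤ γ ^ 2 * m⁻¹ := le_trans h2 this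
        _ = (γ * Real.sqrt m⁻¹) ^ 2 := by
            rw [mul_pow, Real.sq_sqrt (by positivity : (0:ℝ) ≤ m⁻¹)]
  have hcontF : Continuous fun p : (Fin n → ℝ) × (Fin n → ℝ) =>
      (A.mulVec p.1 + B.mulVec p.2) ⬝ᵥ X.mulVec (A.mulVec p.1 + B.mulVec p.2) := by
    have hF : Continuous fun p : (Fin n → ℝ) × (Fin n → ℝ) =>
        A.mulVec p.1 + B.mulVec p.2 :=
      (continuous_const.matrix_mulVec continuous_fst).add
        (continuous_const.matrix_mulVec continuous_snd)
    exact hF.dotProduct (continuous_const.matrix_mulVec hF)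
  obtain ⟨p0, hp0K, hp0max⟩ := hKcpt.exists_isMaxOn hKne hcontF.continuousOn
  set lam : ℝ := (A.mulVec p0.1 + B.mulVec p0.2) ⬝ᵥ
    X.mulVec (A.mulVec p0.1 + B.mulVec p0.2) with hlamdef
  have hp01 : p0.1 ⬝ᵥ X.mulVec p0.1 = 1 := hp0K.1
  have hp0sec : p0.2 ⬝ᵥ p0.2 ≤ γ ^ 2 * (p0.1 ⬝ᵥ p0.1) := hp0K.2
  have hp0ne : p0.1 ≠ 0 := by
    intro h
    rw [h] at hp01
    simp at hp01
  have hlam1 : lam < 1 := by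
    have := hdiss p0.1 p0.2 (fun h => hp0ne h.1) (by linarith)
    rw [hp01] at this
    linarith
  set μ : ℝ := max lam 0 with hμdef
  have hμ0 : 0 ≤ μ := le_max_right _ _
  have hμ1 : μ < 1 := max_lt hlam1 one_pos
  -- one-step contraction
  have hcontr : ∀ t, (ξ (t + 1)) ⬝ᵥ X.mulVec (ξ (t + 1)) ≤
      μ * ((ξ t) ⬝ᵥ X.mulVec (ξ t)) := by
    intro t
    rcases eq_or_ne (ξ t) 0 with h0 | h0
    · have h1 := hΔ t (ξ t)
      rw [h0] at h1
      simp only [zero_dotProduct, mul_zero] at h1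
      have hw : Δ t 0 = 0 := dotProduct_self_eq_zero.mp (le_antisymm h1 (hdotnn _))
      rw [hdyn t, h0, hw]
      simp
    · set v := ξ t with hv
      set w := Δ t (ξ t) with hwv
      have hVv : 0 < v ⬝ᵥ X.mulVec v := hVpos v h0
      set s := Real.sqrt (v ⬝ᵥ X.mulVec v) with hs
      have hs0 : 0 < s := Real.sqrt_pos.mpr hVv
      have hss : s * s = v ⬝ᵥ X.mulVec v := Real.mul_self_sqrt hVv.le
      have hmem : (s⁻¹ • v, s⁻¹ • w) ∈ K := by
        constructor
        · show (s⁻¹ • v) ⬝ᵥ X.mulVec (s⁻¹ • v) = 1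
          rw [hscaleV, ← hss]
          field_simp
        · show (s⁻¹ • w) ⬝ᵥ (s⁻¹ • w) ≤ γ ^ 2 * ((s⁻¹ • v) ⬝ᵥ (s⁻¹ • v))
          rw [hscaleD, hscaleD]
          have h1 := hΔ t (ξ t)
          rw [← hv, ← hwv] at h1
          have h2 : (0:ℝ) ≤ s⁻¹ * s⁻¹ := by positivity
          nlinarith
      have hb : (A.mulVec (s⁻¹ • v) + B.mulVec (s⁻¹ • w)) ⬝ᵥ
          X.mulVec (A.mulVec (s⁻¹ • v) + B.mulVec (s⁻¹ • w)) ≤ lam := hp0max hmem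
      have hlin : A.mulVec (s⁻¹ • v) + B.mulVec (s⁻¹ • w)
          = s⁻¹ • (A.mulVec v + B.mulVec w) := by
        rw [mulVec_smul, mulVec_smul, smul_add]
      rw [hlin, hscaleV] at hb
      have h3 := mul_le_mul_of_nonneg_left hb (mul_pos hs0 hs0).le
      have heq : s * s * (s⁻¹ * (s⁻¹ *
          ((A.mulVec v + B.mulVec w) ⬝ᵥ X.mulVec (A.mulVec v + B.mulVec w))))
          = (A.mulVec v + B.mulVec w) ⬝ᵥ X.mulVec (A.mulVec v + B.mulVec w) := by
        field_simp
      rw [heq, hss] at h3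
      rw [hdyn t, ← hv, ← hwv]
      have hlm : lam ≤ μ := le_max_left _ _
      calc (A.mulVec v + B.mulVec w) ⬝ᵥ X.mulVec (A.mulVec v + B.mulVec w)
          ≤ (v ⬝ᵥ X.mulVec v) * lam := h3
        _ ≤ (v ⬝ᵥ X.mulVec v) * μ := mul_le_mul_of_nonneg_left hlm hVv.le
        _ = μ * (v ⬝ᵥ X.mulVec v) := mul_comm _ _
  -- iterated bound
  have hiter : ∀ t, (ξ t) ⬝ᵥ X.mulVec (ξ t) ≤ μ ^ t * ((ξ 0) ⬝ᵥ X.mulVec (ξ 0)) := by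
    intro t
    induction t with
    | zero => simp
    | succ k ih =>
        calc (ξ (k + 1)) ⬝ᵥ X.mulVec (ξ (k + 1)) ≤ μ * ((ξ k) ⬝ᵥ X.mulVec (ξ k)) :=
              hcontr k
          _ ≤ μ * (μ ^ k * ((ξ 0) ⬝ᵥ X.mulVec (ξ 0))) :=
              mul_le_mul_of_nonneg_left ih hμ0
          _ = μ ^ (k + 1) * ((ξ 0) ⬝ᵥ X.mulVec (ξ 0)) := by ring
  -- conclude convergence
  set C : ℝ := ((ξ 0) ⬝ᵥ X.mulVec (ξ 0)) / m with hCdef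
  have hC0 : 0 ≤ C := div_nonneg (hVnonneg _) hm.le
  have hsqrtpow : ∀ k : ℕ, Real.sqrt (μ ^ k) = Real.sqrt μ ^ k := by
    intro k
    induction k with
    | zero => simp
    | succ k ih => rw [pow_succ, pow_succ, Real.sqrt_mul (by positivity), ih]
  have hbound : ∀ t i, ‖ξ t i‖ ≤ Real.sqrt μ ^ t * Real.sqrt C := by
    intro t i
    have h1 : (ξ t i) ^ 2 ≤ μ ^ t * C := by
      have h2 := hmle (ξ t)
      have h3 := hiter t
      have h4 : ξ t ⬝ᵥ ξ t ≤ μ ^ t * C := by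
        rw [hCdef]
        rw [← mul_le_mul_iff_right₀ hm]
        calc m * (ξ t ⬝ᵥ ξ t) ≤ μ ^ t * ((ξ 0) ⬝ᵥ X.mulVec (ξ 0)) := le_trans h2 h3
          _ = m * (μ ^ t * (((ξ 0) ⬝ᵥ X.mulVec (ξ 0)) / m)) := by field_simp
      exact le_trans (hcoord (ξ t) i) h4
    calc ‖ξ t i‖ = Real.sqrt ((ξ t i) ^ 2) := (Real.sqrt_sq_eq_abs _).symm
      _ ≤ Real.sqrt (μ ^ t * C) := Real.sqrt_le_sqrt h1
      _ = Real.sqrt (μ ^ t) * Real.sqrt C := Real.sqrt_mul (by positivity) _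
      _ = Real.sqrt μ ^ t * Real.sqrt C := by rw [hsqrtpow]
  have hμs : Real.sqrt μ < 1 := by
    rw [show (1:ℝ) = Real.sqrt 1 by simp]
    exact Real.sqrt_lt_sqrt hμ0 hμ1
  rw [tendsto_pi_nhds]
  intro i
  simp only [Pi.zero_apply]
  refine squeeze_zero_norm (fun t => hbound t i) ?_
  have h := (tendsto_pow_atTop_nhds_zero_of_lt_one (Real.sqrt_nonneg μ) hμs).mul_const
    (Real.sqrt C)
  simpa using h
end

section
/- If the matrix inequality AᵀXA - X + τ(2γ² I) + 2τ·(AᵀXB terms) holds in the sense that M := [[AᵀXA - X + 2τγ²I, AᵀXB],[BᵀXA, BᵀXB - 2τI]] ≺ 0 for some X ≻ 0 and τ > 0, then for all ξ ≠ 0 and all w with ‖w‖ ≤ γ‖ξ‖, (Aξ + Bw)ᵀX(Aξ + Bw) < ξᵀXξ. -/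
open Matrix

theorem stmt13 {n : ℕ} (A B : Matrix (Fin n) (Fin n) ℝ) (γ τ : ℝ)
    (hγ : 0 ≤ γ) (hτ : 0 < τ)
    (X : Matrix (Fin n) (Fin n) ℝ) (hX : X.PosDef)
    (hM : (-(Matrix.fromBlocks
        (Aᵀ * X * A - X + (2 * τ * γ ^ 2) • (1 : Matrix (Fin n) (Fin n) ℝ))
        (Aᵀ * X * B) (Bᵀ * X * A)
        (Bᵀ * X * B - (2 * τ) • (1 : Matrix (Fin n) (Fin n) ℝ)))).PosDef) :
    ∀ ξv wv : Fin n → ℝ, ξv ≠ 0 → wv ⬝ᵥ wv ≤ γ ^ 2 * (ξv ⬝ᵥ ξv) →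
      (A.mulVec ξv + B.mulVec wv) ⬝ᵥ X.mulVec (A.mulVec ξv + B.mulVec wv)
        < ξv ⬝ᵥ X.mulVec ξv := by
  intro ξv wv hξ hw
  have hz : (Sum.elim ξv wv : Fin n ⊕ Fin n → ℝ) ≠ 0 := by
    intro h
    apply hξ
    funext i
    exact congrFun h (Sum.inl i)
  have key := hM.dotProduct_mulVec_pos hz
  simp only [star_trivial, neg_mulVec, dotProduct_neg, fromBlocks_mulVec,
    Sum.elim_comp_inl, Sum.elim_comp_inr, sumElim_dotProduct_sumElim,
    sub_mulVec, add_mulVec, smul_mulVec, one_mulVec,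
    ← mulVec_mulVec, dotProduct_add, dotProduct_sub, dotProduct_smul,
    dotProduct_mulVec, vecMul_transpose, smul_eq_mul] at key
  simp only [mulVec_add, dotProduct_add, add_dotProduct, ← dotProduct_mulVec]
  simp only [← dotProduct_mulVec] at key
  nlinarith [key, hw, hτ]
end
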